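/- Let d ≥ 2 and let 0 ≤ p ≤ d²/(d²−1). Then for every X ∈ M_d(ℂ), ((Δ_p^c)† ∘ Δ_p^c)(X) = (p(2−p)/d)·X + (1−p)²·Tr(X)·I_d, where (Δ_p^c)† is the Hilbert–Schmidt adjoint of Δ_p^c. -/

import Mathlib

open scoped ENNReal ComplexOrder Matrix
open Matrix

noncomputable section

namespace EoP

/-- Partial trace over the right (second) tensor factor. -/
def ptraceRight {α β : Type*} [Fintype β] (A : Matrix (α × β) (α × β) ℂ) : Matrix α α ℂ :=
  fun a b => ∑ j, A (a, j) (b, j)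

/-- Partial trace over the left (first) tensor factor. -/
def ptraceLeft {α β : Type*} [Fintype α] (A : Matrix (α × β) (α × β) ℂ) : Matrix β β ℂ :=
  fun a b => ∑ i, A (i, a) (i, b)

/-- `Ω ⊗ id`, acting blockwise on the left tensor factor. -/
def mapLeft {α α' β : Type*} (Ω : Matrix α α ℂ → Matrix α' α' ℂ)
    (A : Matrix (α × β) (α × β) ℂ) : Matrix (α' × β) (α' × β) ℂ :=
  fun p q => Ω (fun a b => A (a, p.2) (b, q.2)) p.1 q.1

/-- `id ⊗ Λ`, acting blockwise on the right tensor factor. -/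
def mapRight {α α' β : Type*} (Λ : Matrix α α ℂ → Matrix α' α' ℂ)
    (A : Matrix (β × α) (β × α) ℂ) : Matrix (β × α') (β × α') ℂ :=
  fun p q => Λ (fun a b => A (p.1, a) (q.1, b)) p.2 q.2

/-- The normalized maximally entangled state `|Φ⟩⟨Φ|` on `α ⊗ α`. -/
def maxEntState (α : Type*) [Fintype α] [DecidableEq α] : Matrix (α × α) (α × α) ℂ :=
  fun x y => if x.1 = x.2 ∧ y.1 = y.2 then (Fintype.card α : ℂ)⁻¹ else 0

/-- Complete positivity: `Ω ⊗ id_k` preserves positive semidefiniteness for every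
finite-dimensional ancilla. -/
def IsCompletelyPositive {α α' : Type*} [Fintype α] [Fintype α'] (Ω : Matrix α α ℂ → Matrix α' α' ℂ) : Prop :=
  ∀ (k : ℕ) (A : Matrix (α × Fin k) (α × Fin k) ℂ), A.PosSemidef → (mapLeft Ω A).PosSemidef

/-- Trace preservation. -/
def IsTracePreserving {α α' : Type*} [Fintype α] [Fintype α']
    (Ω : Matrix α α ℂ → Matrix α' α' ℂ) : Prop :=
  ∀ X, (Ω X).trace = X.trace

/-- CPTP map: linear, completely positive and trace preserving. -/
def IsCPTP {α α' : Type*} [Fintype α] [Fintype α']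
    (Ω : Matrix α α ℂ → Matrix α' α' ℂ) : Prop :=
  IsLinearMap ℂ Ω ∧ IsCompletelyPositive Ω ∧ IsTracePreserving Ω

/-- Schatten `p`-norm of a (square, complex) matrix, via its singular values,
i.e. `‖A‖_p = (Tr |A|^p)^(1/p)` for `p < ∞` and the largest singular value for `p = ∞`. -/
def schattenNorm {α : Type*} [Fintype α] [DecidableEq α] (p : ℝ≥0∞)
    (A : Matrix α α ℂ) : ℝ :=
  if p = ⊤ then
    ⨆ i, Real.sqrt ((Matrix.posSemidef_conjTranspose_mul_self A).1.eigenvalues i)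
  else
    (∑ i, Real.sqrt ((Matrix.posSemidef_conjTranspose_mul_self A).1.eigenvalues i) ^ p.toReal)
      ^ (1 / p.toReal)

/-- The constrained maximal output Schatten `p`-norm
`υ_p(Ω) = sup_{E, Λ CPTP} ‖(Ω ⊗ id_E)((id ⊗ Λ)(Φ))‖_p`. -/
def upsilon {α α' : Type*} [Fintype α] [DecidableEq α] [Fintype α'] [DecidableEq α']
    (p : ℝ≥0∞) (Ω : Matrix α α ℂ → Matrix α' α' ℂ) : ℝ :=
  ⨆ e : ℕ, ⨆ Λ : {Λ : Matrix α α ℂ → Matrix (Fin e) (Fin e) ℂ // IsCPTP Λ},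
    schattenNorm p (mapLeft Ω (mapRight Λ.1 (maxEntState α)))

/-- The transpose-depolarizing channel `Γ_t(X) = t Xᵀ + (1−t) Tr(X) I/d`. -/
def Gamma (d : ℕ) (t : ℝ) (X : Matrix (Fin d) (Fin d) ℂ) : Matrix (Fin d) (Fin d) ℂ :=
  (t : ℂ) • Xᵀ + (((1 - t) / (d : ℝ) : ℝ) : ℂ) • X.trace • (1 : Matrix (Fin d) (Fin d) ℂ)

/-- The completely depolarizing map `D(X) = Tr(X) I/d`. -/
def depol (d : ℕ) (X : Matrix (Fin d) (Fin d) ℂ) : Matrix (Fin d) (Fin d) ℂ :=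
  ((d : ℂ)⁻¹) • X.trace • (1 : Matrix (Fin d) (Fin d) ℂ)

/-- `n`-fold tensor power of a (linear) map on matrix algebras. -/
def tensorPowMap {α α' : Type*} [Fintype α] [DecidableEq α] (n : ℕ)
    (Φ : Matrix α α ℂ → Matrix α' α' ℂ)
    (X : Matrix (Fin n → α) (Fin n → α) ℂ) :
    Matrix (Fin n → α') (Fin n → α') ℂ :=
  fun a b => ∑ k : Fin n → α, ∑ l : Fin n → α,
    (∏ i, Φ (Matrix.single (k i) (l i) 1) (a i) (b i)) * X k l

/-- The swap (flip) operator on `ℂ^d ⊗ ℂ^d`. -/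
def swapOp (d : ℕ) : Matrix (Fin d × Fin d) (Fin d × Fin d) ℂ :=
  fun p q => if p.1 = q.2 ∧ p.2 = q.1 then 1 else 0

/-- The Datta–Fukuda–Holevo operator `P_p` for the depolarizing channel. -/
def Pop (d : ℕ) (p : ℝ) : Matrix (Fin d × Fin d) (Fin d × Fin d) ℂ :=
  ((Real.sqrt (p / d) : ℝ) : ℂ) • (1 : Matrix (Fin d × Fin d) (Fin d × Fin d) ℂ)
    + ((Real.sqrt d * (-(Real.sqrt p) / d
          + Real.sqrt (1 - p * ((d : ℝ) ^ 2 - 1) / (d : ℝ) ^ 2)) : ℝ) : ℂ)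
        • maxEntState (Fin d)

/-- Complementary channel of the depolarizing channel in the Datta–Fukuda–Holevo
representation: `Δ_p^c(X) = P_p (X ⊗ I) P_p`. -/
def DeltaC (d : ℕ) (p : ℝ) (X : Matrix (Fin d) (Fin d) ℂ) :
    Matrix (Fin d × Fin d) (Fin d × Fin d) ℂ :=
  Pop d p * (Matrix.kroneckerMap (· * ·) X (1 : Matrix (Fin d) (Fin d) ℂ)) * Pop d p

open scoped Kronecker

section AuxLemmas

variable {d : ℕ}

lemma maxEnt_conjTranspose : (maxEntState (Fin d))ᴴ = maxEntState (Fin d) := by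
  ext x y
  simp only [conjTranspose_apply, maxEntState]
  by_cases h1 : x.1 = x.2 <;> by_cases h2 : y.1 = y.2 <;> simp [h1, h2]

lemma maxEnt_mul_maxEnt (hd : d ≠ 0) :
    maxEntState (Fin d) * maxEntState (Fin d) = maxEntState (Fin d) := by
  have hdc : (d : ℂ) ≠ 0 := Nat.cast_ne_zero.mpr hd
  ext ⟨i, i'⟩ ⟨j, j'⟩
  simp only [mul_apply, maxEntState, Fintype.card_fin, Fintype.sum_prod_type]
  by_cases h1 : i = i' <;> by_cases h2 : j = j' <;>
    simp [h1, h2, Finset.sum_ite_eq, ite_and, Finset.mul_sum]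
  field_simp

lemma kron_conjTranspose (X : Matrix (Fin d) (Fin d) ℂ) :
    (X ⊗ₖ (1 : Matrix (Fin d) (Fin d) ℂ))ᴴ = Xᴴ ⊗ₖ (1 : Matrix (Fin d) (Fin d) ℂ) := by
  ext ⟨i, i'⟩ ⟨j, j'⟩
  by_cases h : i' = j' <;>
    simp [conjTranspose_apply, kroneckerMap_apply, one_apply, h, eq_comm]

lemma trace_maxEnt_mul_kron (X : Matrix (Fin d) (Fin d) ℂ) :
    (maxEntState (Fin d) * (X ⊗ₖ (1 : Matrix (Fin d) (Fin d) ℂ))).trace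
      = (d : ℂ)⁻¹ * X.trace := by
  simp only [trace, diag_apply, mul_apply, maxEntState, Fintype.card_fin,
    kroneckerMap_apply, one_apply, Fintype.sum_prod_type]
  rw [Finset.mul_sum]
  refine Finset.sum_congr rfl fun i _ => ?_
  simp [ite_and, Finset.sum_ite_eq, Finset.sum_ite_eq', mul_comm, Finset.mul_sum]

lemma maxEnt_mul_kron_mul_maxEnt (X : Matrix (Fin d) (Fin d) ℂ) :
    maxEntState (Fin d) * (X ⊗ₖ (1 : Matrix (Fin d) (Fin d) ℂ)) * maxEntState (Fin d)
      = ((d : ℂ)⁻¹ * X.trace) • maxEntState (Fin d) := by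
  ext ⟨i, i'⟩ ⟨j, j'⟩
  simp only [mul_apply, maxEntState, Fintype.card_fin, kroneckerMap_apply, one_apply,
    Fintype.sum_prod_type, Matrix.smul_apply, smul_eq_mul, trace, diag_apply]
  by_cases h1 : i = i' <;> by_cases h2 : j = j' <;>
    simp [h1, h2, ite_and, Finset.sum_ite_eq, Finset.sum_ite_eq', Finset.mul_sum,
      Finset.sum_mul, mul_comm, mul_left_comm]


lemma Pop_conjTranspose (p : ℝ) : (Pop d p)ᴴ = Pop d p := by
  simp [Pop, conjTranspose_add, conjTranspose_smul, maxEnt_conjTranspose,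
    Complex.star_def, Complex.conj_ofReal]

lemma Pop_sq (hd : 2 ≤ d) {p : ℝ} (hp0 : 0 ≤ p)
    (hp1 : p ≤ (d : ℝ) ^ 2 / ((d : ℝ) ^ 2 - 1)) :
    Pop d p * Pop d p
      = ((p / d : ℝ) : ℂ) • (1 : Matrix (Fin d × Fin d) (Fin d × Fin d) ℂ)
        + (((d : ℝ) * (1 - p) : ℝ) : ℂ) • maxEntState (Fin d) := by
  have hd0 : d ≠ 0 := by omega
  have hd' : (0:ℝ) < d := by exact_mod_cast Nat.pos_of_ne_zero hd0
  have hd2 : (0:ℝ) < (d:ℝ)^2 - 1 := by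
    have : (2:ℝ) ≤ d := by exact_mod_cast hd
    nlinarith
  simp only [Pop]
  set q : ℝ := 1 - p * ((d : ℝ) ^ 2 - 1) / (d : ℝ) ^ 2 with hqdef
  set a : ℝ := Real.sqrt (p / d) with hadef
  set b : ℝ := Real.sqrt d * (-Real.sqrt p / d + Real.sqrt q) with hbdef
  have hq : 0 ≤ q := by
    rw [hqdef, sub_nonneg, div_le_one (by positivity)]
    exact (le_div_iff₀ hd2).mp hp1
  have hsd : Real.sqrt d * Real.sqrt d = (d:ℝ) := Real.mul_self_sqrt hd'.le
  have hsd0 : Real.sqrt d ≠ 0 := by positivity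
  have key1 : a * a = p / d := Real.mul_self_sqrt (by positivity)
  have key2 : a + b = Real.sqrt d * Real.sqrt q := by
    rw [hadef, hbdef, Real.sqrt_div hp0]
    field_simp
    linear_combination (-(Real.sqrt p)) * hsd
  have key3 : (a + b) * (a + b) = (d:ℝ) * q := by
    rw [key2, mul_mul_mul_comm, hsd, Real.mul_self_sqrt hq]
  have hquot : (d:ℝ) * q = d - p * d + p / d := by
    rw [hqdef]; field_simp; ring
  have hab : a * b + (b * a + b * b) = (d:ℝ) * (1 - p) := by
    linear_combination key3 - key1 + hquot
  have c1 : ((p / d : ℝ) : ℂ) = (a:ℂ) * a := by rw [← key1]; push_cast; ring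
  have c2 : (((d:ℝ) * (1 - p) : ℝ) : ℂ) = (a:ℂ) * b + ((b:ℂ) * a + (b:ℂ) * b) := by
    rw [← hab]; push_cast; ring
  rw [c1, c2, add_mul, mul_add, mul_add]
  simp only [smul_mul_assoc, mul_smul_comm, one_mul, mul_one, maxEnt_mul_maxEnt hd0,
    smul_smul, add_smul]
  abel

lemma kron_mul_kron (X Y : Matrix (Fin d) (Fin d) ℂ) :
    (X ⊗ₖ (1 : Matrix (Fin d) (Fin d) ℂ)) * (Y ⊗ₖ (1 : Matrix (Fin d) (Fin d) ℂ))
      = (X * Y) ⊗ₖ (1 : Matrix (Fin d) (Fin d) ℂ) := by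
  rw [← Matrix.mul_kronecker_mul, mul_one]

lemma trace_kron (X : Matrix (Fin d) (Fin d) ℂ) :
    (X ⊗ₖ (1 : Matrix (Fin d) (Fin d) ℂ)).trace = (d : ℂ) * X.trace := by
  rw [Matrix.trace_kronecker, trace_one]
  simp [mul_comm, Fintype.card_fin]

lemma DeltaC_conjTranspose (p : ℝ) (X : Matrix (Fin d) (Fin d) ℂ) :
    (DeltaC d p X)ᴴ = DeltaC d p Xᴴ := by
  simp only [DeltaC, conjTranspose_mul, Pop_conjTranspose, kron_conjTranspose, mul_assoc]

lemma trace_DeltaC_mul (hd : 2 ≤ d) {p : ℝ} (hp0 : 0 ≤ p)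
    (hp1 : p ≤ (d : ℝ) ^ 2 / ((d : ℝ) ^ 2 - 1))
    (X Y : Matrix (Fin d) (Fin d) ℂ) :
    ((DeltaC d p X)ᴴ * DeltaC d p Y).trace
      = ((p * (2 - p) / (d : ℝ) : ℝ) : ℂ) * (Xᴴ * Y).trace
        + (((1 - p) ^ 2 : ℝ) : ℂ) * Xᴴ.trace * Y.trace := by
  have hd0 : d ≠ 0 := by omega
  have hdc : (d : ℂ) ≠ 0 := Nat.cast_ne_zero.mpr hd0
  rw [DeltaC_conjTranspose]
  simp only [DeltaC]
  set K := Xᴴ ⊗ₖ (1 : Matrix (Fin d) (Fin d) ℂ) with hK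
  set L := Y ⊗ₖ (1 : Matrix (Fin d) (Fin d) ℂ) with hL
  have h1 : (Pop d p * K * Pop d p * (Pop d p * L * Pop d p)).trace
      = (K * (Pop d p * Pop d p) * (L * (Pop d p * Pop d p))).trace := by
    rw [show Pop d p * K * Pop d p * (Pop d p * L * Pop d p)
        = Pop d p * (K * (Pop d p * Pop d p) * (L * Pop d p)) by
      simp only [mul_assoc]]
    rw [trace_mul_comm]
    simp only [mul_assoc]
  rw [h1, Pop_sq hd hp0 hp1]
  have t1 : (K * L).trace = (d : ℂ) * (Xᴴ * Y).trace := by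
    rw [hK, hL, kron_mul_kron, trace_kron]
  have t2 : (K * (L * maxEntState (Fin d))).trace = (d : ℂ)⁻¹ * (Xᴴ * Y).trace := by
    rw [← mul_assoc, trace_mul_comm, hK, hL, kron_mul_kron, trace_maxEnt_mul_kron]
  have t3 : (K * maxEntState (Fin d) * L).trace = (d : ℂ)⁻¹ * (Xᴴ * Y).trace := by
    rw [trace_mul_cycle, trace_mul_comm, hK, hL, kron_mul_kron,
      trace_maxEnt_mul_kron, trace_mul_comm]
  have t4 : (K * maxEntState (Fin d) * (L * maxEntState (Fin d))).trace
      = (d : ℂ)⁻¹ * Xᴴ.trace * ((d : ℂ)⁻¹ * Y.trace) := by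
    rw [← mul_assoc, trace_mul_comm, hK, hL]
    rw [show maxEntState (Fin d) * ((Xᴴ ⊗ₖ (1 : Matrix (Fin d) (Fin d) ℂ))
          * maxEntState (Fin d) * (Y ⊗ₖ (1 : Matrix (Fin d) (Fin d) ℂ)))
        = (maxEntState (Fin d) * (Xᴴ ⊗ₖ (1 : Matrix (Fin d) (Fin d) ℂ))
            * maxEntState (Fin d)) * (Y ⊗ₖ (1 : Matrix (Fin d) (Fin d) ℂ)) by
      simp only [mul_assoc]]
    rw [maxEnt_mul_kron_mul_maxEnt, smul_mul_assoc, trace_smul, trace_maxEnt_mul_kron]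
    simp [mul_assoc]
  simp only [mul_add, add_mul, mul_smul_comm, smul_mul_assoc, mul_one, one_mul,
    trace_add, trace_smul, smul_eq_mul, smul_smul]
  rw [t1, t2, t3, t4]
  push_cast
  field_simp
  ring

lemma ext_of_trace {M N : Matrix (Fin d) (Fin d) ℂ}
    (h : ∀ X, (Mᴴ * X).trace = (Nᴴ * X).trace) : M = N := by
  ext i j
  have h2 := h (Matrix.single i j 1)
  have key : ∀ (M : Matrix (Fin d) (Fin d) ℂ),
      (Mᴴ * Matrix.single i j 1).trace = star (M i j) := by
    intro M
    simp [trace, mul_apply, Matrix.single, conjTranspose_apply, ite_and,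
      Finset.sum_ite_eq, Finset.sum_ite_eq']
  rw [key M, key N] at h2
  simpa using congrArg star h2


end AuxLemmas

/-- `(Δ_p^c)† ∘ Δ_p^c = (p(2 − p)/d)·id + (1 − p)²·Tr[·]·I`. -/
theorem adjoint_square_DeltaC
    (d : ℕ) (hd : 2 ≤ d) (p : ℝ) (hp0 : 0 ≤ p)
    (hp1 : p ≤ (d : ℝ) ^ 2 / ((d : ℝ) ^ 2 - 1))
    (Nadj : Matrix (Fin d × Fin d) (Fin d × Fin d) ℂ → Matrix (Fin d) (Fin d) ℂ)
    (hadj : ∀ (X : Matrix (Fin d) (Fin d) ℂ) (Y : Matrix (Fin d × Fin d) (Fin d × Fin d) ℂ),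
      (Yᴴ * DeltaC d p X).trace = ((Nadj Y)ᴴ * X).trace) :
    ∀ X : Matrix (Fin d) (Fin d) ℂ,
      Nadj (DeltaC d p X)
        = ((p * (2 - p) / (d : ℝ) : ℝ) : ℂ) • X
          + (((1 - p) ^ 2 : ℝ) : ℂ) • X.trace • (1 : Matrix (Fin d) (Fin d) ℂ) := by
  intro X
  apply ext_of_trace
  intro X'
  rw [← hadj X' (DeltaC d p X), trace_DeltaC_mul hd hp0 hp1]
  simp only [conjTranspose_add, conjTranspose_smul, Matrix.add_mul, smul_mul_assoc,
    trace_add, trace_smul, conjTranspose_one, smul_eq_mul, Complex.star_def,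
    Complex.conj_ofReal, one_mul]
  rw [Matrix.trace_conjTranspose, Complex.star_def]
  ring

end EoP
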